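/- For every LC-NSB evacuation run on an initial loopless multigraph G(0) on n ≥ 2 vertices, the evacuation time T is finite and satisfies 2·T ≤ 3·X′, where X′ is the minimum evacuation time of G(0); moreover, if the support of G(0) is bipartite, then T = Δ(0) = X′, where Δ(0) is the maximum degree of G(0). That is, the LC-NSB algorithm has an approximation ratio no greater than 3/2 for the evacuation time and is evacuation-time-optimal in bipartite graphs. -/

import Mathlib

open scoped Classical
set_option linter.unusedVariables false
set_option linter.unusedSectionVars false
set_option maxHeartbeats 800000

namespace NSBPaper

variable {V : Type} [Fintype V] [DecidableEq V]

/-- Degree of a vertex in a loopless multigraph given by multiplicity function `w`. -/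
def deg (w : V → V → ℕ) (v : V) : ℕ := ∑ u, w v u

/-- Maximum degree of the multigraph. -/
def maxDeg (w : V → V → ℕ) : ℕ := Finset.univ.sup fun v => deg w v

/-- The support simple graph of a multigraph: `u` and `v` are adjacent iff `u ≠ v`
and there is at least one multi-edge between them. -/
def support (w : V → V → ℕ) : SimpleGraph V where
  Adj u v := u ≠ v ∧ 1 ≤ w u v ∧ 1 ≤ w v u
  symm := ⟨fun u v h => ⟨h.1.symm, h.2.2, h.2.1⟩⟩
  loopless := ⟨fun v h => h.1 rfl⟩

/-- A set of unordered pairs `M` saturates a vertex `v` if some pair of `M` contains `v`. -/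
def Saturates (M : Finset (Sym2 V)) (v : V) : Prop := ∃ e ∈ M, v ∈ e

/-- `M` is a matching of the multigraph `w`: its elements are non-loop edges of the
support, and no two distinct elements share a vertex. -/
def IsMatching (w : V → V → ℕ) (M : Finset (Sym2 V)) : Prop :=
  (∀ e ∈ M, ¬ e.IsDiag) ∧
  (∀ u v : V, s(u, v) ∈ M → 1 ≤ w u v) ∧
  (∀ e ∈ M, ∀ f ∈ M, e ≠ f → ∀ x : V, x ∈ e → x ∉ f)

/-- `M` is a maximal matching of `w`: no pair can be added keeping it a matching. -/
def IsMaximalMatching (w : V → V → ℕ) (M : Finset (Sym2 V)) : Prop :=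
  IsMatching w M ∧ ∀ e : Sym2 V, e ∉ M → ¬ IsMatching w (insert e M)

/-- Removing a matching `M` from the multigraph `w`: the multiplicity of each pair in `M`
decreases by one. -/
def removeMatching (w : V → V → ℕ) (M : Finset (Sym2 V)) : V → V → ℕ :=
  fun u v => if s(u, v) ∈ M then w u v - 1 else w u v

/-- The subgraph of `G` induced by `Z` is bipartite: there is a set `A` such that every
edge of `G` inside `Z` joins `A` to its complement. -/
def BipartiteOn (G : SimpleGraph V) (Z : Set V) : Prop :=
  ∃ A : Set V, ∀ ⦃u v : V⦄, u ∈ Z → v ∈ Z → G.Adj u v → (u ∈ A ↔ v ∉ A)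

/-- The edge multiset of `w` can be partitioned into `T` matchings. -/
def CanEvacuate (w : V → V → ℕ) (T : ℕ) : Prop :=
  ∃ M : Fin T → Finset (Sym2 V),
    (∀ j, IsMatching w (M j)) ∧
    ∀ u v : V, (Finset.univ.filter fun j => s(u, v) ∈ M j).card = w u v

/-- The vertex-weight of a matching: the sum of the weights of its saturated vertices. -/
noncomputable def matchWeight (φ : V → ℕ) (M : Finset (Sym2 V)) : ℕ :=
  ∑ v : V, if Saturates M v then φ v else 0

/-- `Rfun M k i = 1` iff vertex `i` is saturated by the matching chosen in slot `k`. -/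
noncomputable def Rfun (M : ℕ → Finset (Sym2 V)) (k : ℕ) (i : V) : ℕ :=
  if Saturates (M k) i then 1 else 0

/-- `Ufun M k i` is `R i (k-1) * R i (k-2)` if `k ≡ 2 [MOD 3]` and `R i (k-1)` otherwise,
with `R i k = 0` for `k < 0`. -/
noncomputable def Ufun (M : ℕ → Finset (Sym2 V)) (k : ℕ) (i : V) : ℕ :=
  if k = 0 then 0
  else if k % 3 = 2 then Rfun M (k - 1) i * Rfun M (k - 2) i
  else Rfun M (k - 1) i

/-- Vertex `i` is heavy in `w`: `n * d(i) ≥ (n - 1) * Δ`. -/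
def Heavy (w : V → V → ℕ) (i : V) : Prop :=
  (Fintype.card V - 1) * maxDeg w ≤ Fintype.card V * deg w i

/-- Vertex `i` is critical in `w`: its degree is the maximum degree. -/
def Critical (w : V → V → ℕ) (i : V) : Prop := deg w i = maxDeg w

/-- The NSB weight of vertex `i`, where `u i` records whether `i` received enough
service previously. -/
noncomputable def nsbWeight (w : V → V → ℕ) (u : V → ℕ) (i : V) : ℕ :=
  if Heavy w i then deg w i * (2 - u i) else deg w i

/-- The LC-NSB weight of vertex `i`. -/
noncomputable def lcnsbWeight (w : V → V → ℕ) (u : V → ℕ) (i : V) : ℕ :=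
  if Critical w i then 5 - 2 * u i
  else if Heavy w i then 4 - 2 * u i
  else 1

/-- An NSB evacuation run on the initial multigraph `w0`: in each slot `k`, a matching
`M k` of `G k` maximizing the total NSB weight of saturated vertices is removed. -/
structure NSBRun (w0 : V → V → ℕ) where
  G : ℕ → V → V → ℕ
  M : ℕ → Finset (Sym2 V)
  init : G 0 = w0
  step : ∀ k, G (k + 1) = removeMatching (G k) (M k)
  matching : ∀ k, IsMatching (G k) (M k)
  opt : ∀ k, ∀ M' : Finset (Sym2 V), IsMatching (G k) M' →
    matchWeight (nsbWeight (G k) (Ufun M k)) M' ≤ matchWeight (nsbWeight (G k) (Ufun M k)) (M k)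

/-- An LC-NSB evacuation run on the initial multigraph `w0`. -/
structure LCNSBRun (w0 : V → V → ℕ) where
  G : ℕ → V → V → ℕ
  M : ℕ → Finset (Sym2 V)
  init : G 0 = w0
  step : ∀ k, G (k + 1) = removeMatching (G k) (M k)
  matching : ∀ k, IsMatching (G k) (M k)
  opt : ∀ k, ∀ M' : Finset (Sym2 V), IsMatching (G k) M' →
    matchWeight (lcnsbWeight (G k) (Ufun M k)) M' ≤
      matchWeight (lcnsbWeight (G k) (Ufun M k)) (M k)


lemma matching_edge_le {w : V → V → ℕ} {M : Finset (Sym2 V)} (h : IsMatching w M)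
    {u v : V} (huv : s(u,v) ∈ M) : 1 ≤ w u v ∧ 1 ≤ w v u := by
  refine ⟨h.2.1 u v huv, h.2.1 v u ?_⟩
  rwa [Sym2.eq_swap]

lemma matching_edge_ne {w : V → V → ℕ} {M : Finset (Sym2 V)} (h : IsMatching w M)
    {u v : V} (huv : s(u,v) ∈ M) : u ≠ v := by
  intro he
  exact h.1 _ huv (by rw [he]; exact Sym2.mk_isDiag_iff.2 rfl)

lemma matching_unique {w : V → V → ℕ} {M : Finset (Sym2 V)} (h : IsMatching w M)
    {e f : Sym2 V} (he : e ∈ M) (hf : f ∈ M) {x : V} (hxe : x ∈ e) (hxf : x ∈ f) : e = f := by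
  by_contra hne
  exact h.2.2 e he f hf hne x hxe hxf

lemma matching_partner_unique {w : V → V → ℕ} {M : Finset (Sym2 V)} (h : IsMatching w M)
    {v a b : V} (ha : s(v,a) ∈ M) (hb : s(v,b) ∈ M) : a = b := by
  have := matching_unique h ha hb (Sym2.mem_mk_left v a) (Sym2.mem_mk_left v b)
  rw [Sym2.eq_iff] at this
  rcases this with ⟨-, h2⟩ | ⟨h1, h2⟩
  · exact h2
  · exact h2.trans h1

lemma saturates_insert {M : Finset (Sym2 V)} {e : Sym2 V} {v : V} :
    Saturates (insert e M) v ↔ v ∈ e ∨ Saturates M v := by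
  constructor
  · rintro ⟨f, hf, hvf⟩
    rcases Finset.mem_insert.1 hf with rfl | hf
    · exact Or.inl hvf
    · exact Or.inr ⟨f, hf, hvf⟩
  · rintro (hv | ⟨f, hf, hvf⟩)
    · exact ⟨e, Finset.mem_insert_self e M, hv⟩
    · exact ⟨f, Finset.mem_insert_of_mem hf, hvf⟩

lemma saturates_erase {w : V → V → ℕ} {M : Finset (Sym2 V)} (h : IsMatching w M)
    {f : Sym2 V} (hf : f ∈ M) {v : V} :
    Saturates (M.erase f) v ↔ Saturates M v ∧ v ∉ f := by
  constructor
  · rintro ⟨e, he, hve⟩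
    have heM : e ∈ M := Finset.mem_of_mem_erase he
    have hef : e ≠ f := Finset.ne_of_mem_erase he
    exact ⟨⟨e, heM, hve⟩, h.2.2 e heM f hf hef v hve⟩
  · rintro ⟨⟨e, he, hve⟩, hvf⟩
    refine ⟨e, Finset.mem_erase.2 ⟨?_, he⟩, hve⟩
    rintro rfl; exact hvf hve

lemma isMatching_subset {w : V → V → ℕ} {M M' : Finset (Sym2 V)} (h : IsMatching w M)
    (hsub : M' ⊆ M) : IsMatching w M' :=
  ⟨fun e he => h.1 e (hsub he), fun u v huv => h.2.1 u v (hsub huv),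
   fun e he f hf hne x hxe => h.2.2 e (hsub he) f (hsub hf) hne x hxe⟩

lemma isMatching_insert {w : V → V → ℕ} {M : Finset (Sym2 V)} (hM : IsMatching w M)
    {i j : V} (hij : i ≠ j) (hw : 1 ≤ w i j) (hw' : 1 ≤ w j i)
    (hi : ¬ Saturates M i) (hj : ¬ Saturates M j) : IsMatching w (insert s(i,j) M) := by
  refine ⟨?_, ?_, ?_⟩
  · intro e he
    rcases Finset.mem_insert.1 he with rfl | he
    · exact fun hd => hij (Sym2.mk_isDiag_iff.1 hd)
    · exact hM.1 e he
  · intro u v huv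
    rcases Finset.mem_insert.1 huv with h | h
    · rw [Sym2.eq_iff] at h
      rcases h with ⟨rfl, rfl⟩ | ⟨rfl, rfl⟩
      · exact hw
      · exact hw'
    · exact hM.2.1 u v h
  · intro e he f hf hne x hxe
    rcases Finset.mem_insert.1 he with rfl | he <;> rcases Finset.mem_insert.1 hf with rfl | hf
    · exact (hne rfl).elim
    · intro hxf
      rcases Sym2.mem_iff.1 hxe with h | h
      · exact hi ⟨f, hf, h ▸ hxf⟩
      · exact hj ⟨f, hf, h ▸ hxf⟩
    · intro hxf
      rcases Sym2.mem_iff.1 hxf with h | h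
      · exact hi ⟨e, he, h ▸ hxe⟩
      · exact hj ⟨e, he, h ▸ hxe⟩
    · exact hM.2.2 e he f hf hne x hxe

-- weight of inserting an edge between two unsaturated vertices
lemma matchWeight_insert (φ : V → ℕ) {M : Finset (Sym2 V)} {v1 v2 : V}
    (h12 : v1 ≠ v2) (h1 : ¬ Saturates M v1) (h2 : ¬ Saturates M v2) :
    matchWeight φ (insert s(v1,v2) M) = matchWeight φ M + φ v1 + φ v2 := by
  classical
  have hset : ∀ v, Saturates (insert s(v1,v2) M) v ↔ (v = v1 ∨ v = v2) ∨ Saturates M v := by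
    intro v
    rw [saturates_insert, Sym2.mem_iff]
  rw [matchWeight, matchWeight]
  have : ∀ v : V, (if Saturates (insert s(v1,v2) M) v then φ v else 0)
      = (if Saturates M v then φ v else 0) + (if v = v1 then φ v else 0)
        + (if v = v2 then φ v else 0) := by
    intro v
    rw [hset v]
    by_cases hv1 : v = v1 <;> by_cases hv2 : v = v2 <;>
      simp_all [h1, h2] <;> omega
  rw [Finset.sum_congr rfl fun v _ => this v]
  rw [Finset.sum_add_distrib, Finset.sum_add_distrib]
  simp [Finset.sum_ite_eq' Finset.univ]

-- weight of swapping: replace edge s(j,p) by s(i,j) where i unsaturated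
lemma matchWeight_swap (φ : V → ℕ) {w : V → V → ℕ} {M : Finset (Sym2 V)}
    (hM : IsMatching w M) {i j p : V} (hjp : s(j,p) ∈ M) (hi : ¬ Saturates M i) :
    matchWeight φ (insert s(i,j) (M.erase s(j,p))) + φ p = matchWeight φ M + φ i := by
  have hip : i ≠ p := by rintro rfl; exact hi ⟨_, hjp, Sym2.mem_mk_right j i⟩
  have hij : i ≠ j := by rintro rfl; exact hi ⟨_, hjp, Sym2.mem_mk_left i p⟩
  have hjp' : j ≠ p := matching_edge_ne hM hjp
  have hsatj : Saturates M j := ⟨_, hjp, Sym2.mem_mk_left j p⟩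
  have hsatp : Saturates M p := ⟨_, hjp, Sym2.mem_mk_right j p⟩
  have hjerase : ¬ Saturates (M.erase s(j,p)) j := by
    rw [saturates_erase hM hjp]
    rintro ⟨-, hj⟩; exact hj (Sym2.mem_mk_left j p)
  have hierase : ¬ Saturates (M.erase s(j,p)) i := by
    rw [saturates_erase hM hjp]
    rintro ⟨hs, -⟩; exact hi hs
  rw [matchWeight_insert φ hij hierase hjerase]
  -- now: matchWeight (M.erase s(j,p)) + φ i + φ j + φ p = matchWeight M + φ i
  have herase : ∀ v, (if Saturates M v then φ v else 0)
      = (if Saturates (M.erase s(j,p)) v then φ v else 0) + (if v = j then φ v else 0)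
        + (if v = p then φ v else 0) := by
    intro v
    rw [saturates_erase hM hjp, Sym2.mem_iff]
    by_cases hvj : v = j <;> by_cases hvp : v = p <;> simp_all <;> omega
  have : matchWeight φ M = matchWeight φ (M.erase s(j,p)) + φ j + φ p := by
    rw [matchWeight, Finset.sum_congr rfl fun v _ => herase v]
    rw [Finset.sum_add_distrib, Finset.sum_add_distrib]
    rw [matchWeight]
    simp [Finset.sum_ite_eq' Finset.univ]
  omega

-- the core exchange lemma
lemma core_exchange {w : V → V → ℕ} (φ : V → ℕ) (hφ1 : ∀ v, 1 ≤ φ v)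
    (X : Finset V) (c : ℕ) (hc : ∀ v, v ∉ X → φ v ≤ c)
    {N : Finset (Sym2 V)} (hN : IsMatching w N) (hNsat : ∀ x ∈ X, Saturates N x) :
    ∀ n (M : Finset (Sym2 V)), (M \ N).card ≤ n → IsMatching w M →
      ∀ i ∈ X, ¬ Saturates M i →
      ∃ M₂, IsMatching w M₂ ∧ matchWeight φ M + φ i ≤ matchWeight φ M₂ + c := by
  intro n
  induction n with
  | zero =>
    intro M hcard hM i hiX hi
    have hMN : M ⊆ N := by
      intro e he
      by_contra heN
      have h1 : e ∈ M \ N := Finset.mem_sdiff.2 ⟨he, heN⟩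
      have := Finset.card_pos.2 ⟨e, h1⟩
      omega
    obtain ⟨e, heN, hie⟩ := hNsat i hiX
    obtain ⟨j, rfl⟩ := Sym2.mem_iff_exists.1 hie
    have hij : i ≠ j := matching_edge_ne hN heN
    have hj : ¬ Saturates M j := by
      rintro ⟨f, hfM, hjf⟩
      have hfN : f ∈ N := hMN hfM
      have heq : s(i,j) = f := matching_unique hN heN hfN (Sym2.mem_mk_right i j) hjf
      exact hi ⟨f, hfM, heq ▸ Sym2.mem_mk_left i j⟩
    refine ⟨insert s(i,j) M,
      isMatching_insert hM hij (hN.2.1 i j heN) (hN.2.1 j i (Sym2.eq_swap ▸ heN)) hi hj, ?_⟩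
    rw [matchWeight_insert φ hij hi hj]
    have := hφ1 j
    omega
  | succ n ih =>
    intro M hcard hM i hiX hi
    obtain ⟨e, heN, hie⟩ := hNsat i hiX
    obtain ⟨j, rfl⟩ := Sym2.mem_iff_exists.1 hie
    have hij : i ≠ j := matching_edge_ne hN heN
    by_cases hj : Saturates M j
    · obtain ⟨f, hfM, hjf⟩ := hj
      obtain ⟨p, rfl⟩ := Sym2.mem_iff_exists.1 hjf
      have hjp : j ≠ p := matching_edge_ne hM hfM
      have hip : i ≠ p := by rintro rfl; exact hi ⟨_, hfM, Sym2.mem_mk_right j i⟩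
      have hfnotN : s(j,p) ∉ N := by
        intro hfN
        have heq : s(i,j) = s(j,p) :=
          matching_unique hN heN hfN (Sym2.mem_mk_right i j) (Sym2.mem_mk_left j p)
        rw [Sym2.eq_iff] at heq
        rcases heq with ⟨rfl, rfl⟩ | ⟨h1, h2⟩
        · exact hip rfl
        · exact hip h1
      have hjerase : ¬ Saturates (M.erase s(j,p)) j := by
        rw [saturates_erase hM hfM]
        rintro ⟨-, hh⟩; exact hh (Sym2.mem_mk_left j p)
      have hierase : ¬ Saturates (M.erase s(j,p)) i := by
        rw [saturates_erase hM hfM]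
        rintro ⟨hs, -⟩; exact hi hs
      have hM₂ : IsMatching w (insert s(i,j) (M.erase s(j,p))) :=
        isMatching_insert (isMatching_subset hM (Finset.erase_subset _ _)) hij
          (hN.2.1 i j heN) (hN.2.1 j i (Sym2.eq_swap ▸ heN)) hierase hjerase
      set M₂ := insert s(i,j) (M.erase s(j,p)) with hM₂def
      have hwt : matchWeight φ M₂ + φ p = matchWeight φ M + φ i :=
        matchWeight_swap φ hM hfM hi
      by_cases hpX : p ∈ X
      · have hpunsat : ¬ Saturates M₂ p := by
          rw [hM₂def, saturates_insert]
          rintro (hp | hp)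
          · rcases Sym2.mem_iff.1 hp with rfl | rfl
            · exact hip rfl
            · exact hjp rfl
          · rw [saturates_erase hM hfM] at hp
            exact hp.2 (Sym2.mem_mk_right j p)
        have hcard₂ : (M₂ \ N).card ≤ n := by
          have h1 : M₂ \ N = (M.erase s(j,p)) \ N := by
            rw [hM₂def, Finset.insert_sdiff_of_mem _ heN]
          have h2 : (M.erase s(j,p)) \ N = (M \ N).erase s(j,p) := by
            ext x; simp only [Finset.mem_sdiff, Finset.mem_erase]; tauto
          have hfmem : s(j,p) ∈ M \ N := Finset.mem_sdiff.2 ⟨hfM, hfnotN⟩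
          rw [h1, h2]
          have h3 := Finset.card_erase_of_mem hfmem
          have h4 := Finset.card_pos.2 ⟨_, hfmem⟩
          omega
        obtain ⟨M₃, hM₃, hwt₃⟩ := ih M₂ hcard₂ hM₂ p hpX hpunsat
        exact ⟨M₃, hM₃, by omega⟩
      · have := hc p hpX
        exact ⟨M₂, hM₂, by omega⟩
    · refine ⟨insert s(i,j) M,
        isMatching_insert hM hij (hN.2.1 i j heN) (hN.2.1 j i (Sym2.eq_swap ▸ heN)) hi hj, ?_⟩
      rw [matchWeight_insert φ hij hi hj]
      have := hφ1 j
      omega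

-- From an injective neighbor-map with 2-colored internal edges, build a saturating matching
lemma exists_matching_of_injection {w : V → V → ℕ}
    (hsym : ∀ u v, w u v = w v u) (hloop : ∀ v, w v v = 0)
    (σ : V → ℕ) (hσ1 : ∀ v, σ v ≤ 1) :
    ∀ n (X : Finset V) (f : V → V), X.card ≤ n →
    (∀ x ∈ X, 1 ≤ w x (f x)) →
    (∀ x ∈ X, ∀ y ∈ X, f x = f y → x = y) →
    (∀ x ∈ X, f x ∈ X → σ x ≠ σ (f x)) →
    ∃ N, IsMatching w N ∧ (∀ e ∈ N, ∃ x ∈ X, e = s(x, f x)) ∧ ∀ x ∈ X, Saturates N x := by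
  have hempty : IsMatching w (∅ : Finset (Sym2 V)) := by
    refine ⟨?_, ?_, ?_⟩ <;> intro e he <;> simp_all
  intro n
  induction n with
  | zero =>
    intro X f hcard _ _ _
    have hX : X = ∅ := Finset.card_eq_zero.1 (Nat.le_zero.1 hcard)
    subst hX
    exact ⟨∅, hempty, by simp, by simp⟩
  | succ n ih =>
    intro X f hcard hadj hinj hpar
    rcases Finset.eq_empty_or_nonempty X with rfl | hXne
    · exact ⟨∅, hempty, by simp, by simp⟩
    have hfne : ∀ x ∈ X, f x ≠ x := by
      intro x hx heq
      have := hadj x hx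
      rw [heq, hloop] at this
      omega
    by_cases hsrc : ∃ x0 ∈ X, ∀ y ∈ X, f y ≠ x0
    · obtain ⟨x0, hx0X, hx0src⟩ := hsrc
      have hx01 : x0 ≠ f x0 := fun h => hfne x0 hx0X h.symm
      by_cases hx1X : f x0 ∈ X
      · -- remove both x0 and x1 := f x0
        set X' := (X.erase x0).erase (f x0) with hX'
        have hsubX' : X' ⊆ X := fun y hy =>
          Finset.mem_of_mem_erase (Finset.mem_of_mem_erase hy)
        have hcard' : X'.card ≤ n := by
          have h1 : (X.erase x0).card = X.card - 1 := Finset.card_erase_of_mem hx0X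
          have h2 : X'.card ≤ (X.erase x0).card := Finset.card_erase_le
          have h3 : 1 ≤ X.card := Finset.card_pos.2 hXne
          omega
        obtain ⟨N', hN', hedges', hsat'⟩ := ih X' f hcard'
          (fun x hx => hadj x (hsubX' hx))
          (fun x hx y hy h => hinj x (hsubX' hx) y (hsubX' hy) h)
          (fun x hx h => hpar x (hsubX' hx) (hsubX' h))
        have hvert : ∀ x ∈ X', x ≠ x0 ∧ x ≠ f x0 ∧ f x ≠ x0 ∧ f x ≠ f x0 := by
          intro x hx
          refine ⟨Finset.ne_of_mem_erase (Finset.mem_of_mem_erase hx),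
            Finset.ne_of_mem_erase hx, hx0src x (hsubX' hx), ?_⟩
          intro h
          exact Finset.ne_of_mem_erase (Finset.mem_of_mem_erase hx)
            (hinj x (hsubX' hx) x0 hx0X h)
        have hx0unsat : ¬ Saturates N' x0 := by
          rintro ⟨e, heN, hxe⟩
          obtain ⟨x, hxX', rfl⟩ := hedges' e heN
          obtain ⟨h1, h2, h3, h4⟩ := hvert x hxX'
          rcases Sym2.mem_iff.1 hxe with h | h
          · exact h1 h.symm
          · exact h3 h.symm
        have hx1unsat : ¬ Saturates N' (f x0) := by
          rintro ⟨e, heN, hxe⟩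
          obtain ⟨x, hxX', rfl⟩ := hedges' e heN
          obtain ⟨h1, h2, h3, h4⟩ := hvert x hxX'
          rcases Sym2.mem_iff.1 hxe with h | h
          · exact h2 h.symm
          · exact h4 h.symm
        refine ⟨insert s(x0, f x0) N',
          isMatching_insert hN' hx01 (hadj x0 hx0X) (hsym x0 (f x0) ▸ hadj x0 hx0X)
            hx0unsat hx1unsat, ?_, ?_⟩
        · intro e he
          rcases Finset.mem_insert.1 he with rfl | he
          · exact ⟨x0, hx0X, rfl⟩
          · obtain ⟨x, hx, rfl⟩ := hedges' e he
            exact ⟨x, hsubX' hx, rfl⟩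
        · intro x hx
          by_cases h0 : x = x0
          · exact ⟨_, Finset.mem_insert_self _ _, h0 ▸ Sym2.mem_mk_left x0 (f x0)⟩
          by_cases h1 : x = f x0
          · exact ⟨_, Finset.mem_insert_self _ _, h1 ▸ Sym2.mem_mk_right x0 (f x0)⟩
          · have hxX' : x ∈ X' := Finset.mem_erase.2 ⟨h1, Finset.mem_erase.2 ⟨h0, hx⟩⟩
            obtain ⟨e, heN, hxe⟩ := hsat' x hxX'
            exact ⟨e, Finset.mem_insert_of_mem heN, hxe⟩
      · -- remove only x0
        set X' := X.erase x0 with hX'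
        have hsubX' : X' ⊆ X := Finset.erase_subset _ _
        have hcard' : X'.card ≤ n := by
          have h1 : X'.card = X.card - 1 := Finset.card_erase_of_mem hx0X
          have h3 : 1 ≤ X.card := Finset.card_pos.2 hXne
          omega
        obtain ⟨N', hN', hedges', hsat'⟩ := ih X' f hcard'
          (fun x hx => hadj x (hsubX' hx))
          (fun x hx y hy h => hinj x (hsubX' hx) y (hsubX' hy) h)
          (fun x hx h => hpar x (hsubX' hx) (hsubX' h))
        have hvert : ∀ x ∈ X', x ≠ x0 ∧ x ≠ f x0 ∧ f x ≠ x0 ∧ f x ≠ f x0 := by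
          intro x hx
          refine ⟨Finset.ne_of_mem_erase hx, ?_, hx0src x (hsubX' hx), ?_⟩
          · intro h; exact hx1X (h ▸ hsubX' hx)
          · intro h
            exact Finset.ne_of_mem_erase hx (hinj x (hsubX' hx) x0 hx0X h)
        have hx0unsat : ¬ Saturates N' x0 := by
          rintro ⟨e, heN, hxe⟩
          obtain ⟨x, hxX', rfl⟩ := hedges' e heN
          obtain ⟨h1, h2, h3, h4⟩ := hvert x hxX'
          rcases Sym2.mem_iff.1 hxe with h | h
          · exact h1 h.symm
          · exact h3 h.symm
        have hx1unsat : ¬ Saturates N' (f x0) := by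
          rintro ⟨e, heN, hxe⟩
          obtain ⟨x, hxX', rfl⟩ := hedges' e heN
          obtain ⟨h1, h2, h3, h4⟩ := hvert x hxX'
          rcases Sym2.mem_iff.1 hxe with h | h
          · exact h2 h.symm
          · exact h4 h.symm
        refine ⟨insert s(x0, f x0) N',
          isMatching_insert hN' hx01 (hadj x0 hx0X) (hsym x0 (f x0) ▸ hadj x0 hx0X)
            hx0unsat hx1unsat, ?_, ?_⟩
        · intro e he
          rcases Finset.mem_insert.1 he with rfl | he
          · exact ⟨x0, hx0X, rfl⟩
          · obtain ⟨x, hx, rfl⟩ := hedges' e he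
            exact ⟨x, hsubX' hx, rfl⟩
        · intro x hx
          by_cases h0 : x = x0
          · exact ⟨_, Finset.mem_insert_self _ _, h0 ▸ Sym2.mem_mk_left x0 (f x0)⟩
          · have hxX' : x ∈ X' := Finset.mem_erase.2 ⟨h0, hx⟩
            obtain ⟨e, heN, hxe⟩ := hsat' x hxX'
            exact ⟨e, Finset.mem_insert_of_mem heN, hxe⟩
    · -- permutation case
      push_neg at hsrc
      have himg : X.image f = X := by
        have hsub : X ⊆ X.image f := by
          intro x hx
          obtain ⟨y, hy, hfy⟩ := hsrc x hx
          exact Finset.mem_image.2 ⟨y, hy, hfy⟩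
        have hcardim : (X.image f).card ≤ X.card := Finset.card_image_le
        exact (Finset.eq_of_subset_of_card_le hsub hcardim).symm
      have hfX : ∀ x ∈ X, f x ∈ X := by
        intro x hx
        rw [← himg]
        exact Finset.mem_image.2 ⟨x, hx, rfl⟩
      set K := X.filter (fun x => σ x = 0) with hK
      refine ⟨K.image (fun x => s(x, f x)), ?_, ?_, ?_⟩
      · refine ⟨?_, ?_, ?_⟩
        · intro e he
          obtain ⟨x, hx, rfl⟩ := Finset.mem_image.1 he
          have hxX := Finset.mem_of_mem_filter x hx
          exact fun hd => hfne x hxX (Sym2.mk_isDiag_iff.1 hd).symm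
        · intro u v huv
          obtain ⟨x, hx, heq⟩ := Finset.mem_image.1 huv
          have hxX := Finset.mem_of_mem_filter x hx
          rw [Sym2.eq_iff] at heq
          rcases heq with ⟨h1, h2⟩ | ⟨h1, h2⟩
          · rw [← h1, ← h2]; exact hadj x hxX
          · rw [← h1, ← h2, hsym (f x) x]; exact hadj x hxX
        · intro e he g hg hne z hze hzg
          obtain ⟨x, hxK, rfl⟩ := Finset.mem_image.1 he
          obtain ⟨y, hyK, rfl⟩ := Finset.mem_image.1 hg
          have hxX := Finset.mem_of_mem_filter x hxK
          have hyX := Finset.mem_of_mem_filter y hyK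
          have hσx : σ x = 0 := (Finset.mem_filter.1 hxK).2
          have hσy : σ y = 0 := (Finset.mem_filter.1 hyK).2
          have hxy : x ≠ y := fun h => hne (h ▸ rfl)
          rcases Sym2.mem_iff.1 hze with rfl | rfl <;> rcases Sym2.mem_iff.1 hzg with h | h
          · exact hxy h
          · exact hpar y hyX (hfX y hyX) (by rw [← h, hσy, hσx])
          · exact hpar x hxX (hfX x hxX) (by rw [h, hσx, hσy])
          · exact hxy (hinj x hxX y hyX h)
      · intro e he
        obtain ⟨x, hx, rfl⟩ := Finset.mem_image.1 he
        exact ⟨x, Finset.mem_of_mem_filter x hx, rfl⟩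
      · intro x hx
        by_cases hσx : σ x = 0
        · exact ⟨s(x, f x), Finset.mem_image.2 ⟨x, Finset.mem_filter.2 ⟨hx, hσx⟩, rfl⟩,
            Sym2.mem_mk_left x (f x)⟩
        · obtain ⟨y, hy, hfy⟩ := hsrc x hx
          have hσy : σ y = 0 := by
            have h1 : σ y ≠ σ (f y) := hpar y hy (hfy.symm ▸ hx)
            rw [hfy] at h1
            have h2 := hσ1 y
            have h4 := hσ1 x
            omega
          exact ⟨s(y, f y), Finset.mem_image.2 ⟨y, Finset.mem_filter.2 ⟨hy, hσy⟩, rfl⟩,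
            hfy ▸ Sym2.mem_mk_right y (f y)⟩

noncomputable def nbr (w : V → V → ℕ) (v : V) : Finset V :=
  Finset.univ.filter fun u => 1 ≤ w v u

lemma deg_pos_iff {w : V → V → ℕ} {v : V} : 1 ≤ deg w v ↔ ∃ u, 1 ≤ w v u := by
  constructor
  · intro h
    by_contra hc
    push_neg at hc
    have : deg w v = 0 := Finset.sum_eq_zero fun u _ => by have := hc u; omega
    omega
  · rintro ⟨u, hu⟩
    calc 1 ≤ w v u := hu
    _ ≤ deg w v := Finset.single_le_sum (fun x _ => Nat.zero_le _) (Finset.mem_univ u)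

lemma deg_le_maxDeg (w : V → V → ℕ) (v : V) : deg w v ≤ maxDeg w :=
  Finset.le_sup (Finset.mem_univ v)

/-- Hall + parity: any set of heavy vertices whose internal edges are properly
2-colored by `σ` can be saturated by some matching. -/
lemma exists_saturating_matching {w : V → V → ℕ}
    (hsym : ∀ u v, w u v = w v u) (hloop : ∀ v, w v v = 0)
    (hn : 2 ≤ Fintype.card V) (hΔ : 1 ≤ maxDeg w)
    (X : Finset V)
    (hX : ∀ x ∈ X, (Fintype.card V - 1) * maxDeg w ≤ Fintype.card V * deg w x)
    (σ : V → ℕ) (hσ1 : ∀ v, σ v ≤ 1)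
    (hpar : ∀ x ∈ X, ∀ y ∈ X, 1 ≤ w x y → σ x ≠ σ y) :
    ∃ N, IsMatching w N ∧ ∀ x ∈ X, Saturates N x := by
  classical
  set n := Fintype.card V with hndef
  -- Hall condition
  have hall : ∀ S : Finset V, S ⊆ X → S.card ≤ (S.biUnion (nbr w)).card := by
    intro S hSX
    set NS := S.biUnion (nbr w) with hNS
    have key1 : ∑ v ∈ S, deg w v ≤ ∑ u ∈ NS, deg w u := by
      have h1 : ∀ v ∈ S, deg w v = ∑ u ∈ NS, w v u := by
        intro v hv
        rw [deg]
        rw [← Finset.sum_filter_add_sum_filter_not Finset.univ (fun u => u ∈ NS)]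
        have h2 : ∑ u ∈ Finset.univ.filter (fun u => ¬ u ∈ NS), w v u = 0 := by
          apply Finset.sum_eq_zero
          intro u hu
          have hu' := (Finset.mem_filter.1 hu).2
          by_contra hc
          exact hu' (Finset.mem_biUnion.2 ⟨v, hv, Finset.mem_filter.2
            ⟨Finset.mem_univ u, by omega⟩⟩)
        rw [h2, add_zero]
        apply Finset.sum_congr
        · ext u; simp [Finset.mem_filter]
        · intros; rfl
      rw [Finset.sum_congr rfl h1, Finset.sum_comm]
      apply Finset.sum_le_sum
      intro u hu
      calc ∑ v ∈ S, w v u = ∑ v ∈ S, w u v := by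
            apply Finset.sum_congr rfl; intro v _; rw [hsym]
      _ ≤ ∑ v ∈ Finset.univ, w u v := Finset.sum_le_sum_of_subset (Finset.subset_univ S)
      _ = deg w u := rfl
    have key2 : (n - 1) * maxDeg w * S.card ≤ n * ∑ v ∈ S, deg w v := by
      rw [Finset.mul_sum]
      calc (n - 1) * maxDeg w * S.card = ∑ _v ∈ S, (n - 1) * maxDeg w := by
            rw [Finset.sum_const, smul_eq_mul]; ring
      _ ≤ ∑ v ∈ S, n * deg w v := Finset.sum_le_sum fun v hv => hX v (hSX hv)
    have key3 : ∑ u ∈ NS, deg w u ≤ NS.card * maxDeg w := by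
      calc ∑ u ∈ NS, deg w u ≤ ∑ _u ∈ NS, maxDeg w :=
            Finset.sum_le_sum fun u _ => deg_le_maxDeg w u
      _ = NS.card * maxDeg w := by rw [Finset.sum_const, smul_eq_mul]
    have hcomb : (n - 1) * S.card ≤ n * NS.card := by
      have h4 : (n - 1) * maxDeg w * S.card ≤ n * (NS.card * maxDeg w) :=
        le_trans key2 (le_trans (Nat.mul_le_mul_left n key1) (Nat.mul_le_mul_left n key3))
      have h5 : (n - 1) * S.card * maxDeg w ≤ n * NS.card * maxDeg w := by
        calc (n - 1) * S.card * maxDeg w = (n - 1) * maxDeg w * S.card := by ring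
        _ ≤ n * (NS.card * maxDeg w) := h4
        _ = n * NS.card * maxDeg w := by ring
      exact Nat.le_of_mul_le_mul_right h5 hΔ
    by_contra hlt
    push_neg at hlt
    -- then n ≤ S.card so S = univ
    have hSn : S.card ≤ n := by
      rw [hndef]; exact Finset.card_le_univ S
    have hS1 : 1 ≤ S.card := by omega
    obtain ⟨m, hm⟩ : ∃ m, n = m + 1 := ⟨n - 1, by omega⟩
    obtain ⟨t, ht⟩ : ∃ t, S.card = t + 1 := ⟨S.card - 1, by omega⟩
    have hcomb' : m * (t + 1) ≤ (m + 1) * NS.card := by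
      rw [hm, ht] at hcomb
      simpa using hcomb
    have h8 : (m + 1) * NS.card ≤ (m + 1) * t := Nat.mul_le_mul_left _ (by omega)
    have hcomb2 : m * t + m ≤ m * t + t := by
      have e1 : m * (t + 1) = m * t + m := by ring
      have e2 : (m + 1) * t = m * t + t := by ring
      rw [← e1, ← e2]
      exact le_trans hcomb' h8
    have h10 : m ≤ t := Nat.le_of_add_le_add_left hcomb2
    have hnS : n ≤ S.card := by omega
    have hScard : S.card = n := le_antisymm hSn hnS
    have hSuniv : S = Finset.univ := Finset.eq_univ_of_card S hScard
    have hNSuniv : NS = Finset.univ := by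
      apply Finset.eq_univ_of_forall
      intro v
      have hvX : v ∈ X := hSX (hSuniv ▸ Finset.mem_univ v)
      have hdegv : 1 ≤ deg w v := by
        have h6 := hX v hvX
        have h7 : 1 ≤ (n - 1) * maxDeg w :=
          Nat.one_le_iff_ne_zero.2 (Nat.mul_ne_zero (by omega) (by omega))
        by_contra hc
        push_neg at hc
        have h9 : deg w v = 0 := by omega
        rw [h9, Nat.mul_zero] at h6
        omega
      obtain ⟨u, hu⟩ := deg_pos_iff.1 hdegv
      refine Finset.mem_biUnion.2 ⟨u, hSuniv ▸ Finset.mem_univ u, ?_⟩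
      exact Finset.mem_filter.2 ⟨Finset.mem_univ v, by rw [hsym]; exact hu⟩
    rw [hNSuniv] at hlt
    have hcu : (Finset.univ : Finset V).card = n := by rw [hndef]; exact Finset.card_univ
    omega
  -- Hall's theorem
  have hhall : ∀ s : Finset {x // x ∈ X}, s.card ≤ (s.biUnion fun x => nbr w ↑x).card := by
    intro s
    have h1 : (s.image Subtype.val).card = s.card :=
      Finset.card_image_of_injective s Subtype.val_injective
    have h2 : s.biUnion (fun x => nbr w ↑x) = (s.image Subtype.val).biUnion (nbr w) := by
      ext b
      simp only [Finset.mem_biUnion, Finset.mem_image]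
      constructor
      · rintro ⟨a, ha, hb⟩; exact ⟨↑a, ⟨a, ha, rfl⟩, hb⟩
      · rintro ⟨v, ⟨a, ha, rfl⟩, hb⟩; exact ⟨a, ha, hb⟩
    rw [h2, ← h1]
    apply hall
    intro v hv
    obtain ⟨a, _, rfl⟩ := Finset.mem_image.1 hv
    exact a.2
  obtain ⟨f0, hf0inj, hf0mem⟩ :=
    (Finset.all_card_le_biUnion_card_iff_exists_injective (fun x : {x // x ∈ X} => nbr w ↑x)).1
      hhall
  set f : V → V := fun v => if h : v ∈ X then f0 ⟨v, h⟩ else v with hfdef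
  have hfadj : ∀ x ∈ X, 1 ≤ w x (f x) := by
    intro x hx
    have := hf0mem ⟨x, hx⟩
    rw [nbr, Finset.mem_filter] at this
    simp only [hfdef, dif_pos hx]
    exact this.2
  obtain ⟨N, hN, _, hNsat⟩ := exists_matching_of_injection hsym hloop σ hσ1 X.card X f le_rfl
    hfadj
    (by
      intro x hx y hy hxy
      simp only [hfdef, dif_pos hx, dif_pos hy] at hxy
      have := hf0inj hxy
      exact congrArg Subtype.val this)
    (by
      intro x hx hfx
      exact hpar x hx (f x) hfx (hfadj x hx))
  exact ⟨N, hN, hNsat⟩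

-- ## basic weight facts

lemma rfun_le_one (M : ℕ → Finset (Sym2 V)) (k : ℕ) (i : V) : Rfun M k i ≤ 1 := by
  rw [Rfun]; split <;> omega

lemma rfun_eq_zero_iff {M : ℕ → Finset (Sym2 V)} {k : ℕ} {i : V} :
    Rfun M k i = 0 ↔ ¬ Saturates (M k) i := by
  rw [Rfun]; split <;> simp_all

lemma rfun_eq_one_iff {M : ℕ → Finset (Sym2 V)} {k : ℕ} {i : V} :
    Rfun M k i = 1 ↔ Saturates (M k) i := by
  rw [Rfun]; split <;> simp_all

lemma ufun_le_one (M : ℕ → Finset (Sym2 V)) (k : ℕ) (i : V) : Ufun M k i ≤ 1 := by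
  rw [Ufun]
  split
  · omega
  split
  · exact le_trans (Nat.mul_le_mul (rfun_le_one M _ i) (rfun_le_one M _ i)) (by norm_num)
  · exact rfun_le_one M _ i

lemma critical_heavy {w : V → V → ℕ} {i : V} (h : Critical w i) : Heavy w i := by
  rw [Heavy, h]
  exact Nat.mul_le_mul_right _ (Nat.sub_le _ _)

lemma one_le_lcnsb {w : V → V → ℕ} {u : V → ℕ} (hu : ∀ v, u v ≤ 1) (i : V) :
    1 ≤ lcnsbWeight w u i := by
  rw [lcnsbWeight]
  have := hu i
  split
  · omega
  split <;> omega

lemma two_le_lcnsb_of_heavy {w : V → V → ℕ} {u : V → ℕ} (hu : ∀ v, u v ≤ 1) {i : V}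
    (h : Heavy w i) : 2 ≤ lcnsbWeight w u i := by
  have := hu i
  rcases Classical.em (Critical w i) with hc | hc
  · rw [lcnsbWeight, if_pos hc]; omega
  · rw [lcnsbWeight, if_neg hc, if_pos h]; omega

lemma lcnsb_eq_one_of_not_heavy {w : V → V → ℕ} {u : V → ℕ} {i : V}
    (h : ¬ Heavy w i) : lcnsbWeight w u i = 1 := by
  have hc : ¬ Critical w i := fun hc => h (critical_heavy hc)
  rw [lcnsbWeight, if_neg hc, if_neg h]

lemma lcnsb_eq_five {w : V → V → ℕ} {u : V → ℕ} {i : V}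
    (hc : Critical w i) (hu : u i = 0) : lcnsbWeight w u i = 5 := by
  rw [lcnsbWeight, if_pos hc, hu]

lemma lcnsb_le_four {w : V → V → ℕ} {u : V → ℕ} (hu : ∀ v, u v ≤ 1) {i : V}
    (h : ¬ (Critical w i ∧ u i = 0)) : lcnsbWeight w u i ≤ 4 := by
  rw [lcnsbWeight]
  have := hu i
  split
  · rename_i hcrit
    have : u i ≠ 0 := fun h0 => h ⟨hcrit, h0⟩
    omega
  split <;> omega

-- ## run invariants

variable {w0 : V → V → ℕ}

lemma run_mono (run : LCNSBRun w0) (k : ℕ) (u v : V) : run.G (k+1) u v ≤ run.G k u v := by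
  rw [run.step k, removeMatching]
  split <;> omega

lemma run_mono_le (run : LCNSBRun w0) {k l : ℕ} (h : k ≤ l) (u v : V) :
    run.G l u v ≤ run.G k u v := by
  induction l with
  | zero => have : k = 0 := by omega
            subst this; exact le_rfl
  | succ n ih =>
    rcases Nat.lt_or_ge k (n+1) with h1 | h1
    · exact le_trans (run_mono run n u v) (ih (by omega))
    · have : k = n + 1 := by omega
      subst this; exact le_rfl

lemma run_symm (run : LCNSBRun w0) (hsymm : ∀ u v, w0 u v = w0 v u)
    (k : ℕ) (u v : V) : run.G k u v = run.G k v u := by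
  induction k generalizing u v with
  | zero => rw [run.init]; exact hsymm u v
  | succ n ih =>
    rw [run.step n, removeMatching, removeMatching, Sym2.eq_swap (a := u), ih u v]

lemma run_loopless (run : LCNSBRun w0) (hloop : ∀ v, w0 v v = 0)
    (k : ℕ) (v : V) : run.G k v v = 0 := by
  have := run_mono_le run (Nat.zero_le k) v v
  rw [run.init] at this
  have h0 := hloop v
  omega

lemma two_le_deg {w : V → V → ℕ} {u v z : V} (hvz : v ≠ z)
    (h1 : 1 ≤ w u v) (h2 : 1 ≤ w u z) : 2 ≤ deg w u := by
  rw [deg]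
  have h4 : w u v + w u z = ∑ x ∈ ({v, z} : Finset V), w u x := (Finset.sum_pair hvz).symm
  have h5 : ∑ x ∈ ({v, z} : Finset V), w u x ≤ ∑ x, w u x :=
    Finset.sum_le_sum_of_subset (Finset.subset_univ _)
  omega

lemma deg_step (run : LCNSBRun w0) (k : ℕ) (v : V) :
    deg (run.G (k+1)) v + Rfun run.M k v = deg (run.G k) v := by
  rw [run.step k, Rfun]
  by_cases hs : Saturates (run.M k) v
  · rw [if_pos hs]
    obtain ⟨e, heM, hve⟩ := hs
    obtain ⟨z, rfl⟩ := Sym2.mem_iff_exists.1 hve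
    have hvz : v ≠ z := matching_edge_ne (run.matching k) heM
    have hwz : 1 ≤ run.G k v z := (run.matching k).2.1 v z heM
    have huniq : ∀ u, u ≠ z → s(v, u) ∉ run.M k := by
      intro u hu hmem
      exact hu (matching_partner_unique (run.matching k) hmem heM)
    rw [deg, deg]
    rw [← Finset.sum_erase_add _ _ (Finset.mem_univ z),
        ← Finset.sum_erase_add _ _ (Finset.mem_univ z)]
    have hcong : ∀ u ∈ Finset.univ.erase z,
        removeMatching (run.G k) (run.M k) v u = run.G k v u := by
      intro u hu
      rw [removeMatching, if_neg (huniq u (Finset.ne_of_mem_erase hu))]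
    have hfin : (∑ x ∈ Finset.univ.erase z, removeMatching (run.G k) (run.M k) v x)
        = ∑ x ∈ Finset.univ.erase z, run.G k v x := Finset.sum_congr rfl hcong
    have hlast : removeMatching (run.G k) (run.M k) v z = run.G k v z - 1 := by
      rw [removeMatching, if_pos heM]
    rw [hfin, hlast]
    omega
  · rw [if_neg hs]
    rw [deg, deg, add_zero]
    apply Finset.sum_congr rfl
    intro u _
    rw [removeMatching, if_neg]
    intro hmem
    exact hs ⟨_, hmem, Sym2.mem_mk_left v u⟩

lemma deg_mono (run : LCNSBRun w0) (k : ℕ) (v : V) :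
    deg (run.G (k+1)) v ≤ deg (run.G k) v := by
  have := deg_step run k v
  omega

lemma maxDeg_mono (run : LCNSBRun w0) (k : ℕ) :
    maxDeg (run.G (k+1)) ≤ maxDeg (run.G k) := by
  apply Finset.sup_le
  intro v _
  exact le_trans (deg_mono run k v) (deg_le_maxDeg _ v)

lemma maxDeg_mono_le (run : LCNSBRun w0) {k l : ℕ} (h : k ≤ l) :
    maxDeg (run.G l) ≤ maxDeg (run.G k) := by
  induction l with
  | zero => have : k = 0 := by omega
            subst this; exact le_rfl
  | succ n ih =>
    rcases Nat.lt_or_ge k (n+1) with h1 | h1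
    · exact le_trans (maxDeg_mono run n) (ih (by omega))
    · have : k = n + 1 := by omega
      subst this; exact le_rfl

lemma edge_le_deg (w : V → V → ℕ) (u v : V) : w u v ≤ deg w u :=
  Finset.single_le_sum (fun x _ => Nat.zero_le _) (Finset.mem_univ v)

lemma eq_zero_of_maxDeg_zero {w : V → V → ℕ} (h : maxDeg w = 0) (u v : V) : w u v = 0 := by
  have h1 := edge_le_deg w u v
  have h2 := deg_le_maxDeg w u
  omega

-- maximality of optimal matchings
lemma run_maximal (run : LCNSBRun w0) (k : ℕ) {x y : V} (hxy : x ≠ y)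
    (hedge : 1 ≤ run.G k x y) (hedge' : 1 ≤ run.G k y x)
    (hx : ¬ Saturates (run.M k) x) (hy : ¬ Saturates (run.M k) y) : False := by
  set φ := lcnsbWeight (run.G k) (Ufun run.M k) with hφ
  have hM' : IsMatching (run.G k) (insert s(x,y) (run.M k)) :=
    isMatching_insert (run.matching k) hxy hedge hedge' hx hy
  have hle := run.opt k _ hM'
  rw [← hφ, matchWeight_insert φ hxy hx hy] at hle
  have h1 := one_le_lcnsb (u := Ufun run.M k) (w := run.G k) (ufun_le_one run.M k) x
  have h2 := one_le_lcnsb (u := Ufun run.M k) (w := run.G k) (ufun_le_one run.M k) y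
  rw [← hφ] at h1 h2
  omega

lemma run_weight_facts (run : LCNSBRun w0) (k : ℕ) :
    ∀ v, 1 ≤ lcnsbWeight (run.G k) (Ufun run.M k) v :=
  fun v => one_le_lcnsb (ufun_le_one run.M k) v

/-- Main saturation theorem for the critical-U0 class. -/
lemma run_saturates_class (run : LCNSBRun w0)
    (hsymm : ∀ u v, w0 u v = w0 v u) (hloop : ∀ v, w0 v v = 0)
    (hn : 2 ≤ Fintype.card V) (k : ℕ)
    (hΔ : 1 ≤ maxDeg (run.G k)) (σ : V → ℕ) (hσ1 : ∀ v, σ v ≤ 1)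
    (hpar : ∀ x y : V, Critical (run.G k) x → Ufun run.M k x = 0 →
      Critical (run.G k) y → Ufun run.M k y = 0 → 1 ≤ run.G k x y → σ x ≠ σ y)
    {v : V} (hcrit : Critical (run.G k) v) (hU : Ufun run.M k v = 0) :
    Saturates (run.M k) v := by
  classical
  set φ := lcnsbWeight (run.G k) (Ufun run.M k) with hφ
  set X : Finset V := Finset.univ.filter
    (fun x => Critical (run.G k) x ∧ Ufun run.M k x = 0) with hX
  have hmemX : ∀ x, x ∈ X ↔ (Critical (run.G k) x ∧ Ufun run.M k x = 0) := by
    intro x; rw [hX, Finset.mem_filter]; simp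
  obtain ⟨N, hN, hNsat⟩ := exists_saturating_matching
    (run_symm run hsymm k) (run_loopless run hloop k) hn hΔ X
    (fun x hx => by
      have h1 := ((hmemX x).1 hx).1
      exact critical_heavy h1)
    σ hσ1
    (fun x hx y hy hexy => by
      obtain ⟨hcx, hux⟩ := (hmemX x).1 hx
      obtain ⟨hcy, huy⟩ := (hmemX y).1 hy
      exact hpar x y hcx hux hcy huy hexy)
  by_contra hunsat
  obtain ⟨M₂, hM₂, hwt⟩ := core_exchange φ (run_weight_facts run k) X 4
    (fun x hxX => lcnsb_le_four (ufun_le_one run.M k) (fun hcu => hxX ((hmemX x).2 hcu)))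
    hN hNsat (run.M k \ N).card (run.M k) le_rfl (run.matching k) v
    ((hmemX v).2 ⟨hcrit, hU⟩) hunsat
  have hv5 : φ v = 5 := lcnsb_eq_five hcrit hU
  have hopt := run.opt k M₂ hM₂
  rw [← hφ] at hopt
  omega

/-- K1 : at slots k with k % 3 ≠ 0, every critical vertex with U = 0 is saturated. -/
lemma run_crit_u0_saturated (run : LCNSBRun w0)
    (hsymm : ∀ u v, w0 u v = w0 v u) (hloop : ∀ v, w0 v v = 0)
    (hn : 2 ≤ Fintype.card V) {k : ℕ} (hk3 : k % 3 ≠ 0)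
    (hΔ : 1 ≤ maxDeg (run.G k))
    {v : V} (hcrit : Critical (run.G k) v) (hU : Ufun run.M k v = 0) :
    Saturates (run.M k) v := by
  have hk0 : k ≠ 0 := by omega
  have hne : ∀ x y : V, 1 ≤ run.G k x y → x ≠ y := by
    intro x y hxy heq
    rw [heq, run_loopless run hloop k] at hxy
    omega
  have hmono : ∀ l, l ≤ k → ∀ x y : V, 1 ≤ run.G k x y → 1 ≤ run.G l x y := by
    intro l hl x y hxy
    exact le_trans hxy (run_mono_le run hl x y)
  by_cases hk2 : k % 3 = 2
  · -- σ := Rfun at k-2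
    have hufun : ∀ x : V, Ufun run.M k x = Rfun run.M (k-1) x * Rfun run.M (k-2) x := by
      intro x; rw [Ufun, if_neg hk0, if_pos hk2]
    apply run_saturates_class run hsymm hloop hn k hΔ (Rfun run.M (k-2))
      (fun x => rfun_le_one _ _ _)
    · intro x y hcx hux hcy huy hexy heq
      have hux' := hufun x ▸ hux
      have huy' := hufun y ▸ huy
      have hx2 := rfun_le_one run.M (k-2) x
      have hy2 := rfun_le_one run.M (k-2) y
      have hx1 := rfun_le_one run.M (k-1) x
      have hy1 := rfun_le_one run.M (k-1) y
      rcases Nat.eq_zero_or_pos (Rfun run.M (k-2) x) with h0 | h1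
      · -- both unsaturated at k-2
        have h0y : Rfun run.M (k-2) y = 0 := by omega
        have hexy2 : 1 ≤ run.G (k-2) x y := hmono (k-2) (by omega) x y hexy
        have hexy2' : 1 ≤ run.G (k-2) y x := by
          rw [run_symm run hsymm (k-2) y x]; exact hexy2
        exact run_maximal run (k-2) (hne x y hexy) hexy2 hexy2'
          (rfun_eq_zero_iff.1 h0) (rfun_eq_zero_iff.1 h0y)
      · -- both saturated at k-2, so both unsaturated at k-1
        have hx1' : Rfun run.M (k-1) x = 0 := by
          rcases Nat.mul_eq_zero.1 hux' with h | h
          · exact h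
          · omega
        have hy2' : Rfun run.M (k-2) y = Rfun run.M (k-2) x := heq.symm
        have hy1' : Rfun run.M (k-1) y = 0 := by
          rcases Nat.mul_eq_zero.1 huy' with h | h
          · exact h
          · omega
        have hexy1 : 1 ≤ run.G (k-1) x y := hmono (k-1) (by omega) x y hexy
        have hexy1' : 1 ≤ run.G (k-1) y x := by
          rw [run_symm run hsymm (k-1) y x]; exact hexy1
        exact run_maximal run (k-1) (hne x y hexy) hexy1 hexy1'
          (rfun_eq_zero_iff.1 hx1') (rfun_eq_zero_iff.1 hy1')
    · exact hcrit
    · exact hU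
  · -- k % 3 = 1 : U = Rfun at k-1, class is independent
    have hufun : ∀ x : V, Ufun run.M k x = Rfun run.M (k-1) x := by
      intro x; rw [Ufun, if_neg hk0, if_neg hk2]
    apply run_saturates_class run hsymm hloop hn k hΔ (fun _ => 0) (fun _ => by simp)
    · intro x y hcx hux hcy huy hexy heq
      have hux' := hufun x ▸ hux
      have huy' := hufun y ▸ huy
      have hexy1 : 1 ≤ run.G (k-1) x y := hmono (k-1) (by omega) x y hexy
      have hexy1' : 1 ≤ run.G (k-1) y x := by
        rw [run_symm run hsymm (k-1) y x]; exact hexy1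
      exact run_maximal run (k-1) (hne x y hexy) hexy1 hexy1'
        (rfun_eq_zero_iff.1 hux') (rfun_eq_zero_iff.1 huy')
    · exact hcrit
    · exact hU

section Window

variable {w0 : V → V → ℕ}

/-- After two slots of a window, every degree has dropped below the max. -/
lemma run_clm (run : LCNSBRun w0)
    (hsymm : ∀ u v, w0 u v = w0 v u) (hloop : ∀ v, w0 v v = 0)
    (hn : 2 ≤ Fintype.card V) (m : ℕ) (hΔ : 1 ≤ maxDeg (run.G (3*m)))
    (z : V) : deg (run.G (3*m+2)) z + 1 ≤ maxDeg (run.G (3*m)) := by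
  have hstep0 : deg (run.G (3*m+1)) z + Rfun run.M (3*m) z = deg (run.G (3*m)) z :=
    deg_step run (3*m) z
  have hstep1 : deg (run.G (3*m+2)) z + Rfun run.M (3*m+1) z = deg (run.G (3*m+1)) z :=
    deg_step run (3*m+1) z
  have hd0 : deg (run.G (3*m)) z ≤ maxDeg (run.G (3*m)) := deg_le_maxDeg _ z
  by_cases hcase : deg (run.G (3*m+1)) z = maxDeg (run.G (3*m))
  · have hR0 : Rfun run.M (3*m) z = 0 := by omega
    have hmax1 : maxDeg (run.G (3*m+1)) = maxDeg (run.G (3*m)) := by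
      have ha := maxDeg_mono run (3*m)
      have hb := deg_le_maxDeg (run.G (3*m+1)) z
      omega
    have hcrit : Critical (run.G (3*m+1)) z := by rw [Critical]; omega
    have hU : Ufun run.M (3*m+1) z = 0 := by
      rw [Ufun, if_neg (by omega), if_neg (by omega)]
      have h1 : 3*m+1-1 = 3*m := by omega
      rw [h1]
      exact hR0
    have hsat := run_crit_u0_saturated run hsymm hloop hn
      (k := 3*m+1) (by omega) (by omega) hcrit hU
    have hR1 : Rfun run.M (3*m+1) z = 1 := rfun_eq_one_iff.2 hsat
    omega
  · have h1 := deg_mono run (3*m) z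
    have h2 := rfun_le_one run.M (3*m+1) z
    omega

lemma run_window (run : LCNSBRun w0)
    (hsymm : ∀ u v, w0 u v = w0 v u) (hloop : ∀ v, w0 v v = 0)
    (hn : 2 ≤ Fintype.card V) (m : ℕ) (hΔ2 : 2 ≤ maxDeg (run.G (3*m))) :
    maxDeg (run.G (3*m+3)) + 2 ≤ maxDeg (run.G (3*m)) := by
  have hmax2 : maxDeg (run.G (3*m+2)) + 1 ≤ maxDeg (run.G (3*m)) := by
    have h1 : maxDeg (run.G (3*m+2)) ≤ maxDeg (run.G (3*m)) - 1 := by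
      apply Finset.sup_le
      intro x _
      have := run_clm run hsymm hloop hn m (by omega) x
      omega
    omega
  have hkey : ∀ v, deg (run.G (3*m+3)) v + 2 ≤ maxDeg (run.G (3*m)) := by
    intro v
    have hclm := run_clm run hsymm hloop hn m (by omega) v
    have hstep0 : deg (run.G (3*m+1)) v + Rfun run.M (3*m) v = deg (run.G (3*m)) v :=
      deg_step run (3*m) v
    have hstep1 : deg (run.G (3*m+2)) v + Rfun run.M (3*m+1) v = deg (run.G (3*m+1)) v :=
      deg_step run (3*m+1) v
    have hstep2 : deg (run.G (3*m+3)) v + Rfun run.M (3*m+2) v = deg (run.G (3*m+2)) v :=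
      deg_step run (3*m+2) v
    by_cases hcase : deg (run.G (3*m+2)) v + 1 = maxDeg (run.G (3*m))
    · have hmax2' : maxDeg (run.G (3*m+2)) + 1 = maxDeg (run.G (3*m)) := by
        have := deg_le_maxDeg (run.G (3*m+2)) v
        omega
      have hcrit : Critical (run.G (3*m+2)) v := by rw [Critical]; omega
      have hU : Ufun run.M (3*m+2) v = 0 := by
        rw [Ufun, if_neg (by omega), if_pos (by omega)]
        have e1 : 3*m+2-1 = 3*m+1 := by omega
        have e2 : 3*m+2-2 = 3*m := by omega
        rw [e1, e2]
        have hr0 := rfun_le_one run.M (3*m) v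
        have hr1 := rfun_le_one run.M (3*m+1) v
        have hd0 : deg (run.G (3*m)) v ≤ maxDeg (run.G (3*m)) := deg_le_maxDeg _ v
        have hor : Rfun run.M (3*m+1) v = 0 ∨ Rfun run.M (3*m) v = 0 := by omega
        rcases hor with h | h
        · rw [h, Nat.zero_mul]
        · rw [h, Nat.mul_zero]
      have hsat := run_crit_u0_saturated run hsymm hloop hn
        (k := 3*m+2) (by omega) (by omega) hcrit hU
      have hR2 : Rfun run.M (3*m+2) v = 1 := rfun_eq_one_iff.2 hsat
      omega
    · have := rfun_le_one run.M (3*m+2) v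
      omega
  have h2 : maxDeg (run.G (3*m+3)) ≤ maxDeg (run.G (3*m)) - 2 := by
    apply Finset.sup_le
    intro v _
    have := hkey v
    omega
  omega

/-- If the max degree is at most 1, the graph is evacuated in one more slot. -/
lemma run_slot1 (run : LCNSBRun w0)
    (hsymm : ∀ u v, w0 u v = w0 v u) (hloop : ∀ v, w0 v v = 0)
    {k : ℕ} (hΔ : maxDeg (run.G k) ≤ 1) : ∀ u v, run.G (k+1) u v = 0 := by
  have hdeg : ∀ v, deg (run.G (k+1)) v = 0 := by
    intro v
    by_contra hne
    have hstep := deg_step run k v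
    have hd : deg (run.G k) v ≤ 1 := le_trans (deg_le_maxDeg _ v) hΔ
    have hd1 : deg (run.G (k+1)) v = 1 := by
      have := rfun_le_one run.M k v
      omega
    have hR : Rfun run.M k v = 0 := by omega
    have hvunsat : ¬ Saturates (run.M k) v := rfun_eq_zero_iff.1 hR
    obtain ⟨u, hu⟩ := deg_pos_iff.1 (by omega : 1 ≤ deg (run.G k) v)
    have huv : u ≠ v := by
      intro heq
      rw [heq, run_loopless run hloop k] at hu
      omega
    have hu' : 1 ≤ run.G k u v := by rw [run_symm run hsymm k u v]; exact hu
    by_cases husat : Saturates (run.M k) u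
    · obtain ⟨e, heM, hue⟩ := husat
      obtain ⟨z, rfl⟩ := Sym2.mem_iff_exists.1 hue
      have huz : u ≠ z := matching_edge_ne (run.matching k) heM
      have hwz : 1 ≤ run.G k u z := (run.matching k).2.1 u z heM
      have hvz : v ≠ z := by
        rintro rfl
        exact hvunsat ⟨_, heM, Sym2.mem_mk_right u v⟩
      have h2 := two_le_deg hvz hu' hwz
      have h3 := deg_le_maxDeg (run.G k) u
      omega
    · exact run_maximal run k huv hu' hu husat hvunsat
  intro u v
  have h1 := edge_le_deg (run.G (k+1)) u v
  have h2 := hdeg u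
  omega

lemma run_zero_propagate (run : LCNSBRun w0) {k l : ℕ} (hkl : k ≤ l)
    (h : ∀ u v, run.G k u v = 0) : ∀ u v, run.G l u v = 0 := by
  intro u v
  have := run_mono_le run hkl u v
  have := h u v
  omega

/-- The main window induction. -/
lemma run_window_induction (run : LCNSBRun w0)
    (hsymm : ∀ u v, w0 u v = w0 v u) (hloop : ∀ v, w0 v v = 0)
    (hn : 2 ≤ Fintype.card V) :
    ∀ j, maxDeg (run.G (3*j)) + 2*j ≤ maxDeg (run.G 0) ∨ (∀ u v, run.G (3*j) u v = 0) := by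
  intro j
  induction j with
  | zero => left; simp
  | succ j ih =>
    rcases ih with hle | hzero
    · by_cases hΔ2 : 2 ≤ maxDeg (run.G (3*j))
      · left
        have := run_window run hsymm hloop hn j hΔ2
        have e1 : 3*(j+1) = 3*j+3 := by ring
        rw [e1]
        omega
      · right
        have h1 : maxDeg (run.G (3*j)) ≤ 1 := by omega
        have h2 := run_slot1 run hsymm hloop h1
        have e1 : 3*(j+1) = (3*j+1) + 2 := by ring
        rw [e1]
        exact run_zero_propagate run (by omega) h2
    · right
      exact run_zero_propagate run (by omega) hzero

/-- Termination with the 3/2 bound against the max degree. -/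
lemma run_terminates (run : LCNSBRun w0)
    (hsymm : ∀ u v, w0 u v = w0 v u) (hloop : ∀ v, w0 v v = 0)
    (hn : 2 ≤ Fintype.card V) :
    ∃ k0, (∀ u v, run.G k0 u v = 0) ∧ 2 * k0 ≤ 3 * maxDeg (run.G 0) := by
  set D0 := maxDeg (run.G 0) with hD0
  rcases Nat.even_or_odd D0 with ⟨q, hq⟩ | ⟨q, hq⟩
  · refine ⟨3*q, ?_, by omega⟩
    rcases run_window_induction run hsymm hloop hn q with h | h
    · intro u v
      have h2 : maxDeg (run.G (3*q)) = 0 := by omega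
      exact eq_zero_of_maxDeg_zero h2 u v
    · exact h
  · refine ⟨3*q+1, ?_, by omega⟩
    rcases run_window_induction run hsymm hloop hn q with h | h
    · have h1 : maxDeg (run.G (3*q)) ≤ 1 := by omega
      exact run_slot1 run hsymm hloop h1
    · exact run_zero_propagate run (by omega) h

end Window

lemma maxDeg_le_canEvacuate {w : V → V → ℕ} {T : ℕ} (h : CanEvacuate w T) :
    maxDeg w ≤ T := by
  obtain ⟨M, hM, hcount⟩ := h
  apply Finset.sup_le
  intro v _
  rw [deg]
  have h1 : ∀ u, w v u = (Finset.univ.filter fun j => s(v, u) ∈ M j).card :=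
    fun u => (hcount v u).symm
  rw [Finset.sum_congr rfl fun u _ => h1 u]
  rw [← Finset.card_biUnion]
  · calc (Finset.univ.biUnion fun u => Finset.univ.filter fun j => s(v, u) ∈ M j).card
        ≤ (Finset.univ : Finset (Fin T)).card := Finset.card_le_card (Finset.subset_univ _)
    _ = T := by simp
  · intro u1 _ u2 _ hne
    simp only [Finset.disjoint_left, Finset.mem_filter]
    rintro j ⟨-, hj1⟩ ⟨-, hj2⟩
    exact hne (matching_partner_unique (hM j) hj1 hj2)

lemma run_telescope (run : LCNSBRun w0) (T : ℕ) (u v : V) :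
    run.G 0 u v = run.G T u v + ∑ k ∈ Finset.range T, (if s(u,v) ∈ run.M k then 1 else 0) := by
  induction T with
  | zero => simp
  | succ T ih =>
    have hstep : run.G T u v = run.G (T+1) u v + (if s(u,v) ∈ run.M T then 1 else 0) := by
      rw [run.step T, removeMatching]
      by_cases hmem : s(u,v) ∈ run.M T
      · rw [if_pos hmem, if_pos hmem]
        have := (run.matching T).2.1 u v hmem
        omega
      · rw [if_neg hmem, if_neg hmem]; omega
    rw [Finset.sum_range_succ]
    omega

lemma canEvacuate_of_run_zero (run : LCNSBRun w0) (T : ℕ)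
    (hzero : ∀ u v, run.G T u v = 0) : CanEvacuate w0 T := by
  refine ⟨fun j => run.M j, ?_, ?_⟩
  · intro j
    have hm := run.matching j
    refine ⟨hm.1, ?_, hm.2.2⟩
    intro u v huv
    have h1 := hm.2.1 u v huv
    have h2 := run_mono_le run (Nat.zero_le (j : ℕ)) u v
    rw [run.init] at h2
    omega
  · intro u v
    have ht := run_telescope run T u v
    rw [hzero u v, run.init] at ht
    rw [Finset.card_filter]
    rw [Fin.sum_univ_eq_sum_range (fun k => if s(u,v) ∈ run.M k then 1 else 0) T]
    omega

-- ## bipartite case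

lemma run_heavy_saturated (run : LCNSBRun w0)
    (hsymm : ∀ u v, w0 u v = w0 v u) (hloop : ∀ v, w0 v v = 0)
    (hn : 2 ≤ Fintype.card V) (A : Set V)
    (hA : ∀ ⦃u v : V⦄, (support w0).Adj u v → (u ∈ A ↔ v ∉ A))
    (k : ℕ) (hΔ : 1 ≤ maxDeg (run.G k))
    {v : V} (hheavy : Heavy (run.G k) v) : Saturates (run.M k) v := by
  classical
  set φ := lcnsbWeight (run.G k) (Ufun run.M k) with hφ
  set X : Finset V := Finset.univ.filter (fun x => Heavy (run.G k) x) with hX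
  have hmemX : ∀ x, x ∈ X ↔ Heavy (run.G k) x := by
    intro x; rw [hX, Finset.mem_filter]; simp
  set σ : V → ℕ := fun x => if x ∈ A then 0 else 1 with hσ
  obtain ⟨N, hN, hNsat⟩ := exists_saturating_matching
    (run_symm run hsymm k) (run_loopless run hloop k) hn hΔ X
    (fun x hx => (hmemX x).1 hx)
    σ (fun x => by rw [hσ]; dsimp; split <;> omega)
    (fun x hx y hy hexy => by
      have hxy : x ≠ y := by
        intro heq
        rw [heq, run_loopless run hloop k] at hexy
        omega
      have hadj : (support w0).Adj x y := by
        have h1 : 1 ≤ w0 x y := by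
          have := run_mono_le run (Nat.zero_le k) x y
          rw [run.init] at this
          omega
        have h2 : 1 ≤ w0 y x := by rw [hsymm y x]; exact h1
        exact ⟨hxy, h1, h2⟩
      have := hA hadj
      rw [hσ]
      dsimp
      by_cases hxA : x ∈ A <;> by_cases hyA : y ∈ A <;> simp_all)
  by_contra hunsat
  obtain ⟨M₂, hM₂, hwt⟩ := core_exchange φ (run_weight_facts run k) X 1
    (fun x hxX => by
      have hnh : ¬ Heavy (run.G k) x := fun hh => hxX ((hmemX x).2 hh)
      rw [hφ, lcnsb_eq_one_of_not_heavy hnh])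
    hN hNsat (run.M k \ N).card (run.M k) le_rfl (run.matching k) v
    ((hmemX v).2 hheavy) hunsat
  have hv2 : 2 ≤ φ v := two_le_lcnsb_of_heavy (ufun_le_one run.M k) hheavy
  have hopt := run.opt k M₂ hM₂
  rw [← hφ] at hopt
  omega

lemma run_bip_drop (run : LCNSBRun w0)
    (hsymm : ∀ u v, w0 u v = w0 v u) (hloop : ∀ v, w0 v v = 0)
    (hn : 2 ≤ Fintype.card V) (A : Set V)
    (hA : ∀ ⦃u v : V⦄, (support w0).Adj u v → (u ∈ A ↔ v ∉ A))
    (k : ℕ) (hΔ : 1 ≤ maxDeg (run.G k)) :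
    maxDeg (run.G (k+1)) + 1 = maxDeg (run.G k) := by
  have hub : maxDeg (run.G (k+1)) + 1 ≤ maxDeg (run.G k) := by
    have h1 : maxDeg (run.G (k+1)) ≤ maxDeg (run.G k) - 1 := by
      apply Finset.sup_le
      intro v _
      have hstep := deg_step run k v
      have hd := deg_le_maxDeg (run.G k) v
      by_cases hcrit : Critical (run.G k) v
      · have hsat := run_heavy_saturated run hsymm hloop hn A hA k hΔ (critical_heavy hcrit)
        have hR := rfun_eq_one_iff.2 hsat
        rw [Critical] at hcrit
        omega
      · rw [Critical] at hcrit
        have : deg (run.G k) v < maxDeg (run.G k) := lt_of_le_of_ne hd hcrit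
        omega
    omega
  have hne : Nonempty V := Fintype.card_pos_iff.mp (by omega)
  obtain ⟨v, -, hv⟩ := Finset.exists_mem_eq_sup Finset.univ Finset.univ_nonempty
    (fun v => deg (run.G k) v)
  have hcrit : Critical (run.G k) v := hv.symm
  have hsat := run_heavy_saturated run hsymm hloop hn A hA k hΔ (critical_heavy hcrit)
  have hR := rfun_eq_one_iff.2 hsat
  have hstep := deg_step run k v
  have hlb : maxDeg (run.G k) - 1 ≤ maxDeg (run.G (k+1)) := by
    have := deg_le_maxDeg (run.G (k+1)) v
    rw [Critical] at hcrit
    omega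
  omega

lemma run_bip_formula (run : LCNSBRun w0)
    (hsymm : ∀ u v, w0 u v = w0 v u) (hloop : ∀ v, w0 v v = 0)
    (hn : 2 ≤ Fintype.card V) (A : Set V)
    (hA : ∀ ⦃u v : V⦄, (support w0).Adj u v → (u ∈ A ↔ v ∉ A)) :
    ∀ k, k ≤ maxDeg (run.G 0) → maxDeg (run.G k) + k = maxDeg (run.G 0) := by
  intro k
  induction k with
  | zero => simp
  | succ k ih =>
    intro hk
    have hk' : k ≤ maxDeg (run.G 0) := by omega
    have hihk := ih hk'
    have hΔ : 1 ≤ maxDeg (run.G k) := by omega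
    have := run_bip_drop run hsymm hloop hn A hA k hΔ
    omega

/-- Every LC-NSB evacuation run terminates with `2·T ≤ 3·X′`; moreover, if
the support of `G(0)` is bipartite then `T = Δ(0) = X′`. -/
theorem lcnsb_evacuation_time {V : Type} [Fintype V] [DecidableEq V]
    (w0 : V → V → ℕ) (hsymm : ∀ u v, w0 u v = w0 v u) (hloop : ∀ v, w0 v v = 0)
    (hn : 2 ≤ Fintype.card V)
    (run : LCNSBRun w0)
    (X' : ℕ) (hX' : IsLeast {T' | CanEvacuate w0 T'} X') :
    (∃ T : ℕ, IsLeast {k | ∀ u v : V, run.G k u v = 0} T ∧ 2 * T ≤ 3 * X') ∧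
    (BipartiteOn (support w0) Set.univ →
      IsLeast {k | ∀ u v : V, run.G k u v = 0} (maxDeg w0) ∧ maxDeg w0 = X') := by
  have hG0 : maxDeg (run.G 0) = maxDeg w0 := by rw [run.init]
  have hD0X : maxDeg w0 ≤ X' := maxDeg_le_canEvacuate hX'.1
  have hneV : Nonempty V := Fintype.card_pos_iff.mp (by omega)
  constructor
  · -- general 3/2 bound
    obtain ⟨k0, hk0zero, hk0le⟩ := run_terminates run hsymm hloop hn
    have hne : Set.Nonempty {k | ∀ u v : V, run.G k u v = 0} := ⟨k0, hk0zero⟩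
    refine ⟨sInf {k | ∀ u v : V, run.G k u v = 0},
      ⟨Nat.sInf_mem hne, fun b hb => Nat.sInf_le hb⟩, ?_⟩
    have h1 : sInf {k | ∀ u v : V, run.G k u v = 0} ≤ k0 := Nat.sInf_le hk0zero
    rw [hG0] at hk0le
    omega
  · -- bipartite case
    rintro ⟨A, hA⟩
    have hA' : ∀ ⦃u v : V⦄, (support w0).Adj u v → (u ∈ A ↔ v ∉ A) :=
      fun u v h => hA trivial trivial h
    have hform := run_bip_formula run hsymm hloop hn A hA'
    have hzero : ∀ u v, run.G (maxDeg w0) u v = 0 := by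
      have h1 := hform (maxDeg (run.G 0)) le_rfl
      rw [hG0] at h1
      have h2 : maxDeg (run.G (maxDeg w0)) = 0 := by omega
      exact fun u v => eq_zero_of_maxDeg_zero h2 u v
    refine ⟨⟨hzero, ?_⟩, le_antisymm hD0X
      (hX'.2 (canEvacuate_of_run_zero run (maxDeg w0) hzero))⟩
    intro b hb
    by_contra hlt
    push_neg at hlt
    have h3 := hform b (by omega)
    rw [hG0] at h3
    have h4 : 1 ≤ maxDeg (run.G b) := by omega
    obtain ⟨vv, -, hvv⟩ := Finset.exists_mem_eq_sup Finset.univ Finset.univ_nonempty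
      (fun v => deg (run.G b) v)
    have h5 : 1 ≤ deg (run.G b) vv := by
      have : maxDeg (run.G b) = deg (run.G b) vv := hvv
      omega
    obtain ⟨u, hu⟩ := deg_pos_iff.1 h5
    have := hb vv u
    omega


end NSBPaper
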